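/- Let P and Q be orthogonal projections on ℂ^d, not both zero. Then the operator norm satisfies ‖P + Q‖ = 1 + ‖PQ‖. -/
import Mathlib

local notation "⟪" x ", " y "⟫" => @inner ℂ _ _ x y

section aux
variable {E : Type*} [NormedAddCommGroup E] [InnerProductSpace ℂ E] [FiniteDimensional ℂ E]

lemma proj_inner (p : E →L[ℂ] E) (hp : IsSelfAdjoint p) (hp2 : p * p = p) (x : E) :
    ⟪p x, x⟫ = ((‖p x‖ ^ 2 : ℝ) : ℂ) := by
  calc ⟪p x, x⟫ = ⟪(p * p) x, x⟫ := by rw [hp2]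
    _ = ⟪p (p x), x⟫ := rfl
    _ = ⟪p x, p x⟫ := hp.isSymmetric (p x) x
    _ = ((‖p x‖ ^ 2 : ℝ) : ℂ) := by
        rw [inner_self_eq_norm_sq_to_K]; norm_cast

lemma proj_norm_le_one (p : E →L[ℂ] E) (hp : IsSelfAdjoint p) (hp2 : p * p = p) :
    ‖p‖ ≤ 1 := by
  have h : ‖p‖ * ‖p‖ = ‖p‖ := by
    conv_rhs => rw [← hp2]
    rw [← CStarRing.norm_star_mul_self (x := p), hp.star_eq]
  nlinarith [norm_nonneg p]

lemma one_le_proj_add (p q : E →L[ℂ] E) (hp : IsSelfAdjoint p) (hp2 : p * p = p)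
    (hq : IsSelfAdjoint q) (hq2 : q * q = q) (hp0 : p ≠ 0) : 1 ≤ ‖p + q‖ := by
  have hx : ∃ x : E, p x ≠ 0 := by
    by_contra h
    push_neg at h
    exact hp0 (ContinuousLinearMap.ext fun x => by simpa using h x)
  obtain ⟨x, hx⟩ := hx
  set y := p x with hy
  have hpy : p y = y := by
    have : (p * p) x = p x := by rw [hp2]
    simpa [hy] using this
  have hy0 : 0 < ‖y‖ := norm_pos_iff.mpr hx
  have h1 : (‖y‖ : ℝ) ^ 2 ≤ RCLike.re ⟪(p + q) y, y⟫ := by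
    have : ⟪(p + q) y, y⟫ = ⟪p y, y⟫ + ⟪q y, y⟫ := by
      rw [ContinuousLinearMap.add_apply, inner_add_left]
    rw [this, proj_inner p hp hp2, proj_inner q hq hq2, hpy]
    rw [← Complex.ofReal_add]
    have hre : RCLike.re ((((‖y‖ ^ 2 + ‖q y‖ ^ 2) : ℝ)) : ℂ) = ‖y‖ ^ 2 + ‖q y‖ ^ 2 := by
      simp [← Complex.ofReal_pow]
    rw [hre]
    nlinarith [sq_nonneg ‖q y‖]
  have h2 : RCLike.re ⟪(p + q) y, y⟫ ≤ ‖p + q‖ * (‖y‖ * ‖y‖) := by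
    calc RCLike.re ⟪(p + q) y, y⟫ ≤ ‖(⟪(p + q) y, y⟫ : ℂ)‖ := RCLike.re_le_norm _
      _ ≤ ‖(p + q) y‖ * ‖y‖ := norm_inner_le_norm _ _
      _ ≤ (‖p + q‖ * ‖y‖) * ‖y‖ := by
          have := (p + q).le_opNorm y
          nlinarith [norm_nonneg y]
      _ = ‖p + q‖ * (‖y‖ * ‖y‖) := by ring
  have hsq : ‖y‖ ^ 2 = ‖y‖ * ‖y‖ := sq ‖y‖
  nlinarith [mul_pos hy0 hy0]

lemma top_eigen {E : Type*} [NormedAddCommGroup E] [InnerProductSpace ℂ E]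
    [FiniteDimensional ℂ E] [Nontrivial E] (T : E →L[ℂ] E) (hT : IsSelfAdjoint T)
    (hpos : ∀ x : E, 0 ≤ RCLike.re ⟪T x, x⟫) :
    ∃ x : E, ‖x‖ = 1 ∧ T x = (‖T‖ : ℂ) • x := by
  have hS : (T : E →ₗ[ℂ] E).IsSymmetric := hT.isSymmetric
  set n := Module.finrank ℂ E with hn'
  have hn : Module.finrank ℂ E = n := rfl
  have hnpos : 0 < n := Module.finrank_pos
  haveI : Nonempty (Fin n) := ⟨⟨0, hnpos⟩⟩
  set b := hS.eigenvectorBasis hn with hb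
  set μ := hS.eigenvalues hn with hμ
  have happ : ∀ i, T (b i) = (μ i : ℂ) • b i := fun i => hS.apply_eigenvectorBasis hn i
  have hunit : ∀ i, ‖b i‖ = 1 := fun i => b.orthonormal.1 i
  -- each eigenvalue is nonneg
  have hμnn : ∀ i, 0 ≤ μ i := by
    intro i
    have := hpos (b i)
    rw [happ i, inner_smul_left, inner_self_eq_norm_sq_to_K, hunit i] at this
    simpa using this
  -- each eigenvalue ≤ ‖T‖
  have hμle : ∀ i, μ i ≤ ‖T‖ := by
    intro i
    have h1 : ‖T (b i)‖ ≤ ‖T‖ := by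
      simpa [hunit i] using T.le_opNorm (b i)
    rw [happ i, norm_smul] at h1
    simp only [Complex.norm_real, hunit i, mul_one] at h1
    exact le_trans (le_abs_self _) h1
  -- pick maximizing index
  obtain ⟨i₀, -, hi₀⟩ := Finset.exists_max_image Finset.univ μ ⟨Classical.arbitrary _, Finset.mem_univ _⟩
  -- ‖T‖ ≤ μ i₀
  have hle : ‖T‖ ≤ μ i₀ := by
    refine ContinuousLinearMap.opNorm_le_bound _ (hμnn i₀) (fun x => ?_)
    have h1 : ‖T x‖ = ‖b.repr (T x)‖ := (b.repr.norm_map (T x)).symm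
    have h2 : ‖x‖ = ‖b.repr x‖ := (b.repr.norm_map x).symm
    rw [h1, h2]
    rw [EuclideanSpace.norm_eq, EuclideanSpace.norm_eq]
    rw [← Real.sqrt_sq (hμnn i₀), ← Real.sqrt_mul (by positivity)]
    apply Real.sqrt_le_sqrt
    rw [Finset.mul_sum]
    apply Finset.sum_le_sum
    intro i _
    have h3 : b.repr (T x) i = (μ i : ℂ) * b.repr x i := hS.eigenvectorBasis_apply_self_apply hn x i
    have h4 : ‖b.repr (T x) i‖ = μ i * ‖b.repr x i‖ := by
      rw [h3, norm_mul, Complex.norm_real, Real.norm_of_nonneg (hμnn i)]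
    rw [h4, mul_pow]
    exact mul_le_mul_of_nonneg_right
      (pow_le_pow_left₀ (hμnn i) (hi₀ i (Finset.mem_univ i)) 2) (by positivity)
  have heq : ‖T‖ = μ i₀ := le_antisymm hle (hμle i₀)
  exact ⟨b i₀, hunit i₀, by rw [happ i₀, heq]⟩

end aux

set_option maxHeartbeats 1000000 in
lemma proj_norm_add {E : Type*} [NormedAddCommGroup E] [InnerProductSpace ℂ E]
    [FiniteDimensional ℂ E] (p q : E →L[ℂ] E) (hp : IsSelfAdjoint p) (hp2 : p * p = p)
    (hq : IsSelfAdjoint q) (hq2 : q * q = q) (hne : p ≠ 0 ∨ q ≠ 0) :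
    ‖p + q‖ = 1 + ‖p * q‖ := by
  haveI : Nontrivial E := by
    by_contra h
    rw [not_nontrivial_iff_subsingleton] at h
    have hz : ∀ r : E →L[ℂ] E, r = 0 := fun r =>
      ContinuousLinearMap.ext fun x => Subsingleton.elim _ _
    rcases hne with h' | h' <;> exact h' (hz _)
  set a := ‖p * q‖ with ha
  have ha0 : 0 ≤ a := norm_nonneg _
  have hadj_p : ContinuousLinearMap.adjoint p = p := ContinuousLinearMap.isSelfAdjoint_iff'.mp hp
  have hadj_q : ContinuousLinearMap.adjoint q = q := ContinuousLinearMap.isSelfAdjoint_iff'.mp hq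
  have hadj_pq : ContinuousLinearMap.adjoint (p * q) = q * p := by
    rw [ContinuousLinearMap.mul_def, ContinuousLinearMap.adjoint_comp, hadj_p, hadj_q,
      ← ContinuousLinearMap.mul_def]
  have hadj_qp : ContinuousLinearMap.adjoint (q * p) = p * q := by
    rw [ContinuousLinearMap.mul_def, ContinuousLinearMap.adjoint_comp, hadj_p, hadj_q,
      ← ContinuousLinearMap.mul_def]
  have hqp_norm : ‖q * p‖ = a := by
    rw [← hadj_pq]
    exact LinearIsometryEquiv.norm_map ContinuousLinearMap.adjoint (p * q)
  have hpqp : ‖p * (q * p)‖ = a * a := by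
    have key := ContinuousLinearMap.norm_adjoint_comp_self (q * p)
    rw [hadj_qp, hqp_norm] at key
    rw [show (p * q) ∘L (q * p) = p * (q * p) by
      rw [← ContinuousLinearMap.mul_def]
      calc p * q * (q * p) = p * (q * q) * p := by noncomm_ring
        _ = p * (q * p) := by rw [hq2]; noncomm_ring] at key
    exact key
  have hqpq : ‖q * (p * q)‖ = a * a := by
    have key := ContinuousLinearMap.norm_adjoint_comp_self (p * q)
    rw [hadj_pq] at key
    rw [show (q * p) ∘L (p * q) = q * (p * q) by
      rw [← ContinuousLinearMap.mul_def]
      calc q * p * (p * q) = q * (p * p) * q := by noncomm_ring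
        _ = q * (p * q) := by rw [hp2]; noncomm_ring] at key
    exact key
  -- selfadjointness and positivity of p + q
  have hsp : IsSelfAdjoint (p + q) := hp.add hq
  have hpos : ∀ x : E, 0 ≤ RCLike.re ⟪(p + q) x, x⟫ := by
    intro x
    have : ⟪(p + q) x, x⟫ = ((‖p x‖ ^ 2 + ‖q x‖ ^ 2 : ℝ) : ℂ) := by
      rw [ContinuousLinearMap.add_apply, inner_add_left, proj_inner p hp hp2 x,
        proj_inner q hq hq2 x, Complex.ofReal_add]
    rw [this]
    have : RCLike.re (((‖p x‖ ^ 2 + ‖q x‖ ^ 2 : ℝ)) : ℂ) = ‖p x‖ ^ 2 + ‖q x‖ ^ 2 := by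
      simp [← Complex.ofReal_pow]
    rw [this]
    positivity
  -- lower bound 1 ≤ ‖p + q‖
  have hone : 1 ≤ ‖p + q‖ := by
    rcases hne with h' | h'
    · exact one_le_proj_add p q hp hp2 hq hq2 h'
    · rw [add_comm]
      exact one_le_proj_add q p hq hq2 hp hp2 h'
  -- upper bound
  have hupper : ‖p + q‖ ≤ 1 + a := by
    obtain ⟨x, hx1, hx⟩ := top_eigen (p + q) hsp hpos
    set lam := ‖p + q‖ with hlam
    have hx' : p x + q x = (lam : ℂ) • x := by
      rw [← hx]; rfl
    by_cases hpx : p x = 0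
    · -- q x = lam • x, so lam ≤ ‖q‖ ≤ 1
      have hqx : q x = (lam : ℂ) • x := by rw [← hx']; simp [hpx]
      have h1 : ‖q x‖ = lam := by
        rw [hqx, norm_smul, hx1, mul_one, Complex.norm_real,
          Real.norm_of_nonneg (norm_nonneg _)]
      have h2 : ‖q x‖ ≤ ‖q‖ := by simpa [hx1] using q.le_opNorm x
      have := proj_norm_le_one q hq hq2
      linarith
    · have hpz : p (p x) = p x := by
        have : (p * p) x = p x := by rw [hp2]
        exact this
      have h1 : p (q x) = ((lam : ℂ) - 1) • p x := by
        have happ : p (p x) + p (q x) = (lam : ℂ) • p x := by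
          rw [← map_add, hx', map_smul]
        rw [hpz] at happ
        calc p (q x) = (lam : ℂ) • p x - p x := by rw [← happ]; abel
          _ = ((lam : ℂ) - 1) • p x := by rw [sub_smul, one_smul]
      have h2 : q (p x) = ((lam : ℂ) - 1) • q x := by
        have hzz : p x = (lam : ℂ) • x - q x := by
          rw [← hx']; abel
        conv_lhs => rw [hzz]
        rw [map_sub, map_smul]
        have : q (q x) = q x := by
          have : (q * q) x = q x := by rw [hq2]
          exact this
        rw [this, sub_smul, one_smul]
      have h3 : (p * (q * p)) (p x) = (((lam : ℂ) - 1) ^ 2) • (p x) := by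
        have : (p * (q * p)) (p x) = p (q (p (p x))) := rfl
        rw [this, hpz, h2, map_smul, h1, smul_smul, sq]
      have h4 : ‖(p * (q * p)) (p x)‖ ≤ (a * a) * ‖p x‖ := by
        calc ‖(p * (q * p)) (p x)‖ ≤ ‖p * (q * p)‖ * ‖p x‖ := (p * (q * p)).le_opNorm (p x)
          _ = (a * a) * ‖p x‖ := by rw [hpqp]
      rw [h3, norm_smul] at h4
      have hz0 : 0 < ‖p x‖ := norm_pos_iff.mpr hpx
      have h5 : ‖((lam : ℂ) - 1) ^ 2‖ ≤ a * a := le_of_mul_le_mul_right (by linarith) hz0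
      have h6 : (lam - 1) * (lam - 1) ≤ a * a := by
        have : ‖((lam : ℂ) - 1) ^ 2‖ = |lam - 1| * |lam - 1| := by
          rw [show ((lam : ℂ) - 1) = ((lam - 1 : ℝ) : ℂ) by push_cast; ring]
          rw [← Complex.ofReal_pow, Complex.norm_real, Real.norm_eq_abs, abs_pow, sq]
        rw [this] at h5
        nlinarith [le_abs_self (lam - 1), abs_nonneg (lam - 1)]
      nlinarith [le_abs_self (lam - 1)]
  -- lower bound 1 + a ≤ ‖p + q‖
  have hlower : 1 + a ≤ ‖p + q‖ := by
    rcases eq_or_lt_of_le ha0 with h0 | h0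
    · rw [← h0]; simpa using hone
    · set s := q * (p * q) with hs
      have hs_sa : IsSelfAdjoint s := by
        rw [ContinuousLinearMap.isSelfAdjoint_iff']
        rw [hs, ContinuousLinearMap.mul_def q (p * q), ContinuousLinearMap.adjoint_comp,
          hadj_q, hadj_pq, ← ContinuousLinearMap.mul_def, mul_assoc]
        exact (ContinuousLinearMap.mul_def _ _).symm
      have hs_pos : ∀ x : E, 0 ≤ RCLike.re ⟪s x, x⟫ := by
        intro x
        have h1 : s x = q (p (q x)) := rfl
        have h2 : ⟪s x, x⟫ = ⟪p (q x), q x⟫ := by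
          rw [h1]; exact hq.isSymmetric (p (q x)) x
        have h3 : RCLike.re (((‖p (q x)‖ ^ 2 : ℝ)) : ℂ) = ‖p (q x)‖ ^ 2 := by
          simp [← Complex.ofReal_pow]
        rw [h2, proj_inner p hp hp2 (q x), h3]
        positivity
      have hsnorm : ‖s‖ = a * a := hqpq
      obtain ⟨y, hy1, hy⟩ := top_eigen s hs_sa hs_pos
      rw [hsnorm] at hy
      have ha2 : ((a * a : ℝ) : ℂ) ≠ 0 := by
        simp only [ne_eq, Complex.ofReal_eq_zero]
        positivity
      have hqy : q y = y := by
        have hqs : q * s = s := by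
          rw [hs, show q * (q * (p * q)) = (q * q) * (p * q) by noncomm_ring, hq2]
        have h1 : q (s y) = s y := by
          calc q (s y) = (q * s) y := rfl
            _ = s y := by rw [hqs]
        rw [hy, map_smul] at h1
        exact smul_right_injective E ha2 h1
      set u := p y with hu
      have hpu : p u = u := by
        have : (p * p) y = p y := by rw [hp2]
        simpa [hu] using this
      have hqu : q u = ((a * a : ℝ) : ℂ) • y := by
        have : q (p (q y)) = s y := rfl
        rw [hqy] at this
        rw [hu, this, hy]
      set w := u + ((a : ℝ) : ℂ) • y with hw
      have hw_eig : (p + q) w = ((1 + a : ℝ) : ℂ) • w := by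
        rw [hw, ContinuousLinearMap.add_apply, map_add, map_add, map_smul, map_smul,
          hpu, hqu, hqy]
        rw [show p y = u from rfl]
        push_cast
        module
      have hw_ne : w ≠ 0 := by
        intro hcon
        have h1 : ⟪y, w⟫ = ((‖u‖ ^ 2 + a : ℝ) : ℂ) := by
          rw [hw, inner_add_right, inner_smul_right, inner_self_eq_norm_sq_to_K, hy1]
          have : ⟪y, u⟫ = ((‖u‖ ^ 2 : ℝ) : ℂ) := by
            have := proj_inner p hp hp2 y
            rw [← hu] at this
            calc ⟪y, u⟫ = starRingEnd ℂ ⟪u, y⟫ := (inner_conj_symm _ _).symm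
              _ = starRingEnd ℂ ((‖u‖ ^ 2 : ℝ) : ℂ) := by rw [this]
              _ = ((‖u‖ ^ 2 : ℝ) : ℂ) := Complex.conj_ofReal _
          rw [this]
          push_cast
          ring
        rw [hcon, inner_zero_right] at h1
        have : (0 : ℝ) = ‖u‖ ^ 2 + a := by
          have := congrArg Complex.re h1
          simpa [← Complex.ofReal_pow] using this
        nlinarith [sq_nonneg ‖u‖]
      have h2 : ((1 + a : ℝ)) * ‖w‖ ≤ ‖p + q‖ * ‖w‖ := by
        calc (1 + a : ℝ) * ‖w‖ = ‖((1 + a : ℝ) : ℂ)‖ * ‖w‖ := by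
              rw [Complex.norm_real, Real.norm_of_nonneg (by linarith)]
          _ = ‖((1 + a : ℝ) : ℂ) • w‖ := (norm_smul _ _).symm
          _ = ‖(p + q) w‖ := by rw [hw_eig]
          _ ≤ ‖p + q‖ * ‖w‖ := (p + q).le_opNorm w
      exact le_of_mul_le_mul_right h2 (norm_pos_iff.mpr hw_ne)
  linarith

open Matrix

/-- The operator norm of a complex square matrix (induced by the Euclidean norm). -/
noncomputable def opNorm {n : Type*} [Fintype n] [DecidableEq n] (M : Matrix n n ℂ) : ℝ :=
  ‖Matrix.toEuclideanCLM (𝕜 := ℂ) M‖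

/-- For orthogonal projections `P`, `Q` on `ℂ^d`, not both zero,
`‖P + Q‖ = 1 + ‖PQ‖`. -/
theorem stmt_10 (d : ℕ) (P Q : Matrix (Fin d) (Fin d) ℂ)
    (hP : Pᴴ = P) (hP2 : P * P = P) (hQ : Qᴴ = Q) (hQ2 : Q * Q = Q)
    (hne : P ≠ 0 ∨ Q ≠ 0) :
    opNorm (P + Q) = 1 + opNorm (P * Q) := by
  let f := Matrix.toEuclideanCLM (𝕜 := ℂ) (n := Fin d)
  have hPsa : _root_.IsSelfAdjoint P := by
    show star P = P
    rw [Matrix.star_eq_conjTranspose]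
    exact hP
  have hQsa : _root_.IsSelfAdjoint Q := by
    show star Q = Q
    rw [Matrix.star_eq_conjTranspose]
    exact hQ
  have hp2 : f P * f P = f P := by rw [← _root_.map_mul]; exact congrArg f hP2
  have hq2 : f Q * f Q = f Q := by rw [← _root_.map_mul]; exact congrArg f hQ2
  have hinj : Function.Injective f := (Matrix.toEuclideanCLM (𝕜 := ℂ) (n := Fin d)).injective
  have hne' : f P ≠ 0 ∨ f Q ≠ 0 := by
    rcases hne with h | h
    · exact Or.inl fun h0 => h (hinj (h0.trans (map_zero f).symm))
    · exact Or.inr fun h0 => h (hinj (h0.trans (map_zero f).symm))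
  have h := proj_norm_add (f P) (f Q) (hPsa.map f) hp2 (hQsa.map f) hq2 hne'
  show ‖Matrix.toEuclideanCLM (𝕜 := ℂ) (P + Q)‖ = 1 + ‖Matrix.toEuclideanCLM (𝕜 := ℂ) (P * Q)‖
  rw [map_add, _root_.map_mul]
  exact h
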